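/- arXiv:2401.11820 — 2 statements merged into one kernel-verified Lean document; each statement's English description precedes it below -/
import Mathlib

section
/- For independent random variables X and Y each exponentially distributed with rate 1, the CDF of the product Z = XY is F_Z(r) = 1 - 2√r·K₁(2√r) for r > 0, where K₁ is the first-order modified Bessel function of the second kind. -/
open MeasureTheory ProbabilityTheory Real Set Filter Topology Asymptotics

/-- Modified Bessel function of the second kind of order 1, via the integral
representation `K₁(x) = ∫₀^∞ exp (-x * cosh t) * cosh t dt`. -/
noncomputable def besselK1 (x : ℝ) : ℝ :=
  ∫ t in Set.Ioi (0 : ℝ), Real.exp (-x * Real.cosh t) * Real.cosh t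

lemma aux_bound {a : ℝ} (ha : 0 < a) (t : ℝ) :
    Real.exp t * Real.exp (-a * Real.cosh t) ≤
      (4 / a * Real.exp (-(a / 4))) * Real.exp (-(a / 4) * t) := by
  have h1 : Real.exp t / 2 ≤ Real.cosh t := by
    rw [Real.cosh_eq]
    have := (Real.exp_pos (-t)).le
    linarith
  have h2 : Real.exp t * Real.exp (-(a / 4 * Real.exp t)) ≤ 4 / a := by
    have hu0 := Real.exp_pos t
    have hv := Real.exp_pos (a / 4 * Real.exp t)
    have hle : a / 4 * Real.exp t + 1 ≤ Real.exp (a / 4 * Real.exp t) :=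
      Real.add_one_le_exp _
    rw [Real.exp_neg, mul_inv_le_iff₀ hv, div_mul_eq_mul_div, le_div_iff₀ (by positivity)]
    nlinarith
  calc Real.exp t * Real.exp (-a * Real.cosh t)
      ≤ Real.exp t * Real.exp (-(a / 2) * Real.exp t) := by
        apply mul_le_mul_of_nonneg_left _ (Real.exp_pos t).le
        apply Real.exp_le_exp.2
        nlinarith
    _ = (Real.exp t * Real.exp (-(a / 4 * Real.exp t))) * Real.exp (-(a / 4 * Real.exp t)) := by
        simp only [← Real.exp_add]; ring_nf
    _ ≤ (4 / a) * Real.exp (-(a / 4 * Real.exp t)) := by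
        apply mul_le_mul_of_nonneg_right h2 (Real.exp_pos _).le
    _ ≤ (4 / a) * Real.exp (-(a / 4 * (1 + t))) := by
        apply mul_le_mul_of_nonneg_left _ (by positivity)
        apply Real.exp_le_exp.2
        have := Real.add_one_le_exp t
        nlinarith
    _ = (4 / a * Real.exp (-(a / 4))) * Real.exp (-(a / 4) * t) := by
        rw [mul_assoc, ← Real.exp_add]; ring_nf

lemma intOn1 {a : ℝ} (ha : 0 < a) :
    IntegrableOn (fun t => Real.exp t * Real.exp (-a * Real.cosh t)) (Ioi (0:ℝ)) := by
  have hb : IntegrableOn (fun t => (4 / a * Real.exp (-(a / 4))) * Real.exp (-(a / 4) * t))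
      (Ioi (0:ℝ)) := (exp_neg_integrableOn_Ioi 0 (by positivity)).const_mul _
  refine MeasureTheory.Integrable.mono hb ?_ ?_
  · exact (Real.continuous_exp.mul
      (Real.continuous_exp.comp (continuous_const.mul Real.continuous_cosh))).aestronglyMeasurable
  · refine ae_of_all _ fun t => ?_
    rw [Real.norm_eq_abs, Real.norm_eq_abs, abs_of_nonneg (by positivity),
      abs_of_nonneg (by positivity)]
    exact aux_bound ha t

lemma intOn2 {a : ℝ} (ha : 0 < a) :
    IntegrableOn (fun t => Real.exp (-t) * Real.exp (-a * Real.cosh t)) (Ioi (0:ℝ)) := by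
  have hb : IntegrableOn (fun t : ℝ => Real.exp (-1 * t)) (Ioi (0:ℝ)) :=
    exp_neg_integrableOn_Ioi 0 one_pos
  refine MeasureTheory.Integrable.mono hb ?_ ?_
  · exact ((Real.continuous_exp.comp continuous_neg).mul
      (Real.continuous_exp.comp (continuous_const.mul Real.continuous_cosh))).aestronglyMeasurable
  · refine ae_of_all _ fun t => ?_
    rw [Real.norm_eq_abs, Real.norm_eq_abs, abs_of_nonneg (by positivity),
      abs_of_nonneg (by positivity)]
    have h1 : Real.exp (-a * Real.cosh t) ≤ 1 := by
      rw [Real.exp_le_one_iff]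
      have := Real.one_le_cosh t
      nlinarith
    calc Real.exp (-t) * Real.exp (-a * Real.cosh t) ≤ Real.exp (-t) * 1 :=
          mul_le_mul_of_nonneg_left h1 (Real.exp_pos _).le
      _ = Real.exp (-1 * t) := by rw [mul_one]; ring_nf

lemma integral_exp_neg_add_div {r : ℝ} (hr : 0 < r) :
    ∫ x in Ioi (0:ℝ), Real.exp (-(x + r / x)) =
      2 * Real.sqrt r * besselK1 (2 * Real.sqrt r) := by
  set s := Real.sqrt r with hs_def
  have hs : 0 < s := Real.sqrt_pos.2 hr
  have hr_eq : r = s ^ 2 := (Real.sq_sqrt hr.le).symm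
  have himg1 : (fun t => s * Real.exp t) '' Ioi 0 = Ioi s := by
    ext y
    simp only [mem_image, mem_Ioi]
    constructor
    · rintro ⟨t, ht, rfl⟩
      have h1 : (1:ℝ) < Real.exp t := by
        rw [← Real.exp_zero]; exact Real.exp_lt_exp.2 ht
      nlinarith
    · intro hy
      have hy0 : 0 < y / s := div_pos (hs.trans hy) hs
      refine ⟨Real.log (y / s), Real.log_pos ((one_lt_div hs).2 hy), ?_⟩
      rw [Real.exp_log hy0]; field_simp
  have himg2 : (fun t => s * Real.exp (-t)) '' Ioi 0 = Ioo 0 s := by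
    ext y
    simp only [mem_image, mem_Ioi, mem_Ioo]
    constructor
    · rintro ⟨t, ht, rfl⟩
      have h1 : Real.exp (-t) < 1 := by
        rw [← Real.exp_zero]; exact Real.exp_lt_exp.2 (by linarith)
      have h2 := Real.exp_pos (-t)
      exact ⟨by positivity, by nlinarith⟩
    · rintro ⟨hy0, hys⟩
      have hq : 0 < y / s := div_pos hy0 hs
      refine ⟨-Real.log (y / s), ?_, ?_⟩
      · have h3 := Real.log_neg hq ((div_lt_one hs).2 hys)
        linarith
      · rw [neg_neg, Real.exp_log hq]; field_simp
  have hderiv1 : ∀ t ∈ Ioi (0:ℝ), HasDerivWithinAt (fun t => s * Real.exp t)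
      (s * Real.exp t) (Ioi 0) t :=
    fun t _ => ((Real.hasDerivAt_exp t).const_mul s).hasDerivWithinAt
  have hderiv2 : ∀ t ∈ Ioi (0:ℝ), HasDerivWithinAt (fun t => s * Real.exp (-t))
      (s * (Real.exp (-t) * (-1))) (Ioi 0) t := by
    intro t _
    exact (((Real.hasDerivAt_exp (-t)).comp t ((hasDerivAt_id t).neg)).const_mul
      s).hasDerivWithinAt
  have hinj1 : InjOn (fun t => s * Real.exp t) (Ioi 0) := by
    intro x _ y _ h
    exact Real.exp_injective (mul_left_cancel₀ hs.ne' h)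
  have hinj2 : InjOn (fun t => s * Real.exp (-t)) (Ioi 0) := by
    intro x _ y _ h
    have := Real.exp_injective (mul_left_cancel₀ hs.ne' h)
    linarith [neg_injective this]
  have hcov1 : ∫ x in Ioi s, Real.exp (-(x + r / x)) =
      ∫ t in Ioi (0:ℝ), s * Real.exp t * Real.exp (-(2 * s) * Real.cosh t) := by
    rw [← himg1, integral_image_eq_integral_abs_deriv_smul measurableSet_Ioi hderiv1 hinj1]
    refine setIntegral_congr_fun measurableSet_Ioi fun t _ => ?_
    have hexp := Real.exp_pos t
    have h1 : s * Real.exp t + r / (s * Real.exp t) = 2 * s * Real.cosh t := by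
      rw [Real.cosh_eq, Real.exp_neg, hr_eq]
      field_simp
    rw [smul_eq_mul, abs_of_nonneg (by positivity), h1]
    ring_nf
  have hcov2 : ∫ x in Ioo (0:ℝ) s, Real.exp (-(x + r / x)) =
      ∫ t in Ioi (0:ℝ), s * Real.exp (-t) * Real.exp (-(2 * s) * Real.cosh t) := by
    rw [← himg2, integral_image_eq_integral_abs_deriv_smul measurableSet_Ioi hderiv2 hinj2]
    refine setIntegral_congr_fun measurableSet_Ioi fun t _ => ?_
    have hexp := Real.exp_pos (-t)
    have h1 : s * Real.exp (-t) + r / (s * Real.exp (-t)) = 2 * s * Real.cosh t := by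
      rw [Real.cosh_eq, Real.exp_neg, hr_eq]
      field_simp
      ring
    have h2 : |s * (Real.exp (-t) * (-1))| = s * Real.exp (-t) := by
      rw [abs_of_nonpos (by nlinarith)]; ring
    rw [smul_eq_mul, h1, h2]
    ring_nf
  have ha : 0 < 2 * s := by positivity
  have hsplit : ∫ x in Ioi (0:ℝ), Real.exp (-(x + r / x)) =
      (∫ x in Ioo (0:ℝ) s, Real.exp (-(x + r / x))) +
      ∫ x in Ioi s, Real.exp (-(x + r / x)) := by
    have hIntOo : IntegrableOn (fun x => Real.exp (-(x + r / x))) (Ioo 0 s) := by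
      rw [← himg2, integrableOn_image_iff_integrableOn_abs_deriv_smul
        measurableSet_Ioi hderiv2 hinj2]
      have h0 := (intOn2 ha).const_mul s
      refine h0.congr ?_
      filter_upwards [ae_restrict_mem measurableSet_Ioi] with t ht
      have hexp := Real.exp_pos (-t)
      have h1 : s * Real.exp (-t) + r / (s * Real.exp (-t)) = 2 * s * Real.cosh t := by
        rw [Real.cosh_eq, Real.exp_neg, hr_eq]
        field_simp
        ring
      have h2 : |s * (Real.exp (-t) * (-1))| = s * Real.exp (-t) := by
        rw [abs_of_nonpos (by nlinarith)]; ring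
      rw [smul_eq_mul, h1, h2]
      ring
    have hIntIoi : IntegrableOn (fun x => Real.exp (-(x + r / x))) (Ioi s) := by
      rw [← himg1, integrableOn_image_iff_integrableOn_abs_deriv_smul
        measurableSet_Ioi hderiv1 hinj1]
      have h0 := (intOn1 ha).const_mul s
      refine h0.congr ?_
      filter_upwards [ae_restrict_mem measurableSet_Ioi] with t ht
      have hexp := Real.exp_pos t
      have h1 : s * Real.exp t + r / (s * Real.exp t) = 2 * s * Real.cosh t := by
        rw [Real.cosh_eq, Real.exp_neg, hr_eq]
        field_simp
      rw [smul_eq_mul, h1, abs_of_nonneg (by positivity)]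
      ring
    have hue : (Ioo (0:ℝ) s ∪ Ioi s : Set ℝ) =ᵐ[(volume : Measure ℝ)] Ioi (0:ℝ) := by
      rw [← Ioo_union_Ici_eq_Ioi hs]
      exact ae_eq_set_union (ae_eq_refl _) Ioi_ae_eq_Ici
    have hdisj : Disjoint (Ioo (0:ℝ) s) (Ioi s) := by
      rw [Set.disjoint_left]
      rintro x ⟨_, h2⟩ h3
      exact lt_asymm h2 h3
    rw [← setIntegral_union hdisj measurableSet_Ioi hIntOo hIntIoi]
    exact (setIntegral_congr_set hue).symm
  rw [hsplit, hcov1, hcov2]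
  have hint1 : Integrable (fun t => s * (Real.exp t * Real.exp (-(2*s) * Real.cosh t)))
      (volume.restrict (Ioi (0:ℝ))) := (intOn1 ha).const_mul s
  have hint2 : Integrable (fun t => s * (Real.exp (-t) * Real.exp (-(2*s) * Real.cosh t)))
      (volume.restrict (Ioi (0:ℝ))) := (intOn2 ha).const_mul s
  have hkey : (∫ t in Ioi (0:ℝ), s * Real.exp (-t) * Real.exp (-(2 * s) * Real.cosh t)) +
      ∫ t in Ioi (0:ℝ), s * Real.exp t * Real.exp (-(2 * s) * Real.cosh t) =
      ∫ t in Ioi (0:ℝ), 2 * s * (Real.exp (-(2 * s) * Real.cosh t) * Real.cosh t) := by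
    rw [show (fun t => s * Real.exp (-t) * Real.exp (-(2 * s) * Real.cosh t)) =
      (fun t => s * (Real.exp (-t) * Real.exp (-(2*s) * Real.cosh t))) from by ext t; ring]
    rw [show (fun t => s * Real.exp t * Real.exp (-(2 * s) * Real.cosh t)) =
      (fun t => s * (Real.exp t * Real.exp (-(2*s) * Real.cosh t))) from by ext t; ring]
    rw [← integral_add hint2 hint1]
    refine setIntegral_congr_fun measurableSet_Ioi fun t _ => ?_
    rw [Real.cosh_eq]
    ring
  rw [hkey, besselK1, integral_const_mul]

/-- The CDF of the product of two independent unit-rate exponential random variables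
is `r ↦ 1 - 2√r·K₁(2√r)` for `r > 0`. -/
theorem product_exponential_cdf {Ω : Type*} [MeasureSpace Ω]
    [IsProbabilityMeasure (ℙ : Measure Ω)]
    (X Y : Ω → ℝ) (hXm : Measurable X) (hYm : Measurable Y)
    (hX : Measure.map X ℙ = expMeasure 1) (hY : Measure.map Y ℙ = expMeasure 1)
    (hindep : IndepFun X Y) (r : ℝ) (hr : 0 < r) :
    ℙ {ω | X ω * Y ω ≤ r} =
      ENNReal.ofReal (1 - 2 * Real.sqrt r * besselK1 (2 * Real.sqrt r)) := by
  haveI : IsProbabilityMeasure (expMeasure 1) := isProbabilityMeasure_expMeasure one_pos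
  have hset : MeasurableSet {p : ℝ × ℝ | p.1 * p.2 ≤ r} :=
    measurableSet_le (measurable_fst.mul measurable_snd) measurable_const
  have hmap : Measure.map (fun ω => (X ω, Y ω)) ℙ = (expMeasure 1).prod (expMeasure 1) := by
    rw [(indepFun_iff_map_prod_eq_prod_map_map hXm.aemeasurable hYm.aemeasurable).mp hindep,
      hX, hY]
  have h1 : ℙ {ω | X ω * Y ω ≤ r} =
      ((expMeasure 1).prod (expMeasure 1)) {p : ℝ × ℝ | p.1 * p.2 ≤ r} := by
    rw [← hmap, Measure.map_apply (hXm.prodMk hYm) hset]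
    rfl
  have hwd : expMeasure 1 = volume.withDensity (exponentialPDF 1) := rfl
  have hν : ∀ x : ℝ, 0 < x →
      (expMeasure 1) (Prod.mk x ⁻¹' {p : ℝ × ℝ | p.1 * p.2 ≤ r}) =
        ENNReal.ofReal (1 - Real.exp (-(r / x))) := by
    intro x hx
    have hset_eq : Prod.mk x ⁻¹' {p : ℝ × ℝ | p.1 * p.2 ≤ r} = Iic (r / x) := by
      ext y
      simp only [mem_preimage, mem_setOf_eq, mem_Iic]
      rw [mul_comm, ← le_div_iff₀ hx]
    rw [hset_eq, hwd, withDensity_apply _ measurableSet_Iic,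
      lintegral_exponentialPDF_eq_antiDeriv one_pos, if_pos (by positivity : (0:ℝ) ≤ r / x),
      one_mul]
  rw [h1, Measure.prod_apply hset]
  have hgmeas : Measurable fun x : ℝ =>
      (expMeasure 1) (Prod.mk x ⁻¹' {p : ℝ × ℝ | p.1 * p.2 ≤ r}) :=
    measurable_measure_prodMk_left hset
  have hpdfm : Measurable (exponentialPDF 1) := (measurable_exponentialPDFReal 1).ennreal_ofReal
  rw [hwd, lintegral_withDensity_eq_lintegral_mul _ hpdfm (by rw [← hwd]; exact hgmeas), ← hwd]
  have h0 : ∀ᵐ (x : ℝ) ∂(volume : Measure ℝ), x ≠ 0 := by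
    rw [ae_iff]
    simp only [ne_eq, not_not, setOf_eq_eq_singleton]
    exact measure_singleton 0
  have hae : (fun x => (exponentialPDF 1 * fun x =>
        (expMeasure 1) (Prod.mk x ⁻¹' {p : ℝ × ℝ | p.1 * p.2 ≤ r})) x) =ᵐ[volume]
      (Ioi (0:ℝ)).indicator
        (fun x => ENNReal.ofReal (Real.exp (-x) - Real.exp (-(x + r / x)))) := by
    filter_upwards [h0] with x hx0
    rcases lt_or_gt_of_ne hx0 with hneg | hpos
    · rw [indicator_of_notMem (by simpa using hneg.le : x ∉ Ioi (0:ℝ)), Pi.mul_apply,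
        exponentialPDF_of_neg hneg, zero_mul]
    · rw [indicator_of_mem (mem_Ioi.2 hpos), Pi.mul_apply, hν x hpos,
        exponentialPDF_of_nonneg hpos.le, one_mul, ← ENNReal.ofReal_mul (Real.exp_pos _).le]
      congr 1
      rw [mul_sub, mul_one, ← Real.exp_add]
      ring_nf
  rw [lintegral_congr_ae hae, lintegral_indicator measurableSet_Ioi]
  have hint_exp : IntegrableOn (fun x : ℝ => Real.exp (-x)) (Ioi 0) := by
    have := exp_neg_integrableOn_Ioi 0 one_pos
    simpa [neg_one_mul] using this
  have hint_prod : IntegrableOn (fun x : ℝ => Real.exp (-(x + r / x))) (Ioi 0) := by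
    refine MeasureTheory.Integrable.mono hint_exp ?_ ?_
    · refine (ContinuousOn.aestronglyMeasurable ?_ measurableSet_Ioi)
      exact Real.continuous_exp.comp_continuousOn
        ((continuousOn_id.add (continuousOn_const.div continuousOn_id
          fun x hx => ne_of_gt hx)).neg)
    · filter_upwards [ae_restrict_mem measurableSet_Ioi] with x hx
      rw [Real.norm_eq_abs, Real.norm_eq_abs, abs_of_nonneg (Real.exp_pos _).le,
        abs_of_nonneg (Real.exp_pos _).le]
      apply Real.exp_le_exp.2
      have : 0 < r / x := div_pos hr (mem_Ioi.mp hx)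
      linarith
  have hint : IntegrableOn
      (fun x : ℝ => Real.exp (-x) - Real.exp (-(x + r / x))) (Ioi 0) :=
    hint_exp.sub hint_prod
  have hnn : 0 ≤ᵐ[volume.restrict (Ioi (0:ℝ))]
      fun x : ℝ => Real.exp (-x) - Real.exp (-(x + r / x)) := by
    filter_upwards [ae_restrict_mem measurableSet_Ioi] with x hx
    have h1 : Real.exp (-(x + r / x)) ≤ Real.exp (-x) := by
      apply Real.exp_le_exp.2
      have : 0 < r / x := div_pos hr (mem_Ioi.mp hx)
      linarith
    simp only [Pi.zero_apply]
    linarith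
  rw [← MeasureTheory.ofReal_integral_eq_lintegral_ofReal hint hnn]
  congr 1
  rw [integral_sub hint_exp hint_prod, integral_exp_neg_Ioi_zero,
    integral_exp_neg_add_div hr]
end

section
/- Let F be a continuous CDF on [0,∞) and θ > 0. Define G(r) = (K(F(r)^{-θ} - 1) + 1)^{-1/θ} for r with F(r) ∈ (0,1]. Then G(r) ≥ F(r)^K for all such r, with equality in the limit θ → 0⁺ (pointwise). -/
open Real Set Filter Topology

/-- The Clayton-coupled CDF of the maximum dominates the independent one:
`G(r) = (K(F(r)^{-θ} - 1) + 1)^{-1/θ} ≥ F(r)^K`, with equality in the limit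
`θ → 0⁺`. -/
theorem clayton_max_cdf_ge_indep (K : ℕ) (hK : 1 ≤ K) (F : ℝ → ℝ)
    (hmono : Monotone F) (hcont : Continuous F)
    (hrange : ∀ x, F x ∈ Set.Icc (0 : ℝ) 1)
    (r : ℝ) (hFr : F r ∈ Set.Ioc (0 : ℝ) 1) :
    (∀ θ : ℝ, 0 < θ →
      F r ^ K ≤ ((K : ℝ) * ((F r) ^ (-θ) - 1) + 1) ^ (-1 / θ)) ∧
    Tendsto (fun θ : ℝ => ((K : ℝ) * ((F r) ^ (-θ) - 1) + 1) ^ (-1 / θ))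
      (𝓝[>] 0) (𝓝 (F r ^ K)) := by
  obtain ⟨hp, hp1⟩ := hFr
  set p : ℝ := F r with hpdef
  constructor
  · intro θ hθ
    set x : ℝ := p ^ (-θ) with hxdef
    have hx1 : 1 ≤ x := Real.one_le_rpow_of_pos_of_le_one_of_nonpos hp hp1 (by linarith)
    have hB1 : (1 : ℝ) ≤ (K : ℝ) * (x - 1) + 1 := by
      have hKc : (1:ℝ) ≤ (K:ℝ) := by exact_mod_cast hK
      nlinarith
    have hBern : (K : ℝ) * (x - 1) + 1 ≤ x ^ K := by
      have := one_add_mul_sub_le_pow (a := x) (by linarith) K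
      linarith
    have hxK : x ^ K = p ^ (-θ * (K : ℝ)) := by
      rw [hxdef, ← Real.rpow_natCast (p ^ (-θ)) K, ← Real.rpow_mul hp.le]
    have key : (x ^ K : ℝ) ^ (-1 / θ) ≤ ((K : ℝ) * (x - 1) + 1) ^ (-1 / θ) := by
      refine Real.rpow_le_rpow_of_nonpos (by linarith) hBern ?_
      apply div_nonpos_of_nonpos_of_nonneg <;> linarith
    have hfin : (x ^ K : ℝ) ^ (-1 / θ) = p ^ K := by
      rw [hxK, ← Real.rpow_mul hp.le]
      have : -θ * (K : ℝ) * (-1 / θ) = (K : ℝ) := by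
        field_simp
      rw [this, Real.rpow_natCast]
    linarith [key, hfin.symm.le]
  · -- limit part
    have hlogp : Real.log p ≤ 0 := Real.log_nonpos hp.le hp1
    -- u θ = p ^ (-θ) as exp
    have hu : ∀ θ : ℝ, p ^ (-θ) = Real.exp (-θ * Real.log p) := fun θ => by
      rw [Real.rpow_def_of_pos hp, mul_comm]
    set g : ℝ → ℝ := fun θ => Real.log ((K : ℝ) * (Real.exp (-θ * Real.log p) - 1) + 1)
      with hgdef
    have hderiv_inner : HasDerivAt (fun θ : ℝ => -θ * Real.log p) (-Real.log p) 0 := by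
      simpa using ((hasDerivAt_id (0:ℝ)).neg.mul_const (Real.log p))
    have hderiv_u : HasDerivAt (fun θ : ℝ => Real.exp (-θ * Real.log p))
        (-Real.log p) 0 := by
      simpa using hderiv_inner.exp
    have hderiv_v : HasDerivAt (fun θ : ℝ => (K : ℝ) * (Real.exp (-θ * Real.log p) - 1) + 1)
        ((K : ℝ) * (-Real.log p)) 0 := by
      simpa using ((hderiv_u.sub_const 1).const_mul (K : ℝ)).add_const 1
    have hderiv_g : HasDerivAt g ((K : ℝ) * (-Real.log p)) 0 := by
      have h := hderiv_v.log (by norm_num)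
      have e : (K : ℝ) * (Real.exp (-(0:ℝ) * Real.log p) - 1) + 1 = 1 := by
        norm_num
      rw [e, div_one] at h
      exact h
    have hslope : Tendsto (slope g 0) (𝓝[≠] 0) (𝓝 ((K : ℝ) * (-Real.log p))) :=
      hasDerivAt_iff_tendsto_slope.mp hderiv_g
    have hslope' : Tendsto (slope g 0) (𝓝[>] 0) (𝓝 ((K : ℝ) * (-Real.log p))) :=
      hslope.mono_left (nhdsWithin_mono _ (fun x hx => ne_of_gt hx))
    have hexp : Tendsto (fun θ : ℝ => Real.exp (-(slope g 0 θ))) (𝓝[>] 0)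
        (𝓝 (Real.exp (-((K : ℝ) * (-Real.log p))))) :=
      (Real.continuous_exp.tendsto _).comp hslope'.neg
    have hval : Real.exp (-((K : ℝ) * (-Real.log p))) = p ^ K := by
      have : -((K : ℝ) * (-Real.log p)) = (K : ℝ) * Real.log p := by ring
      rw [this, Real.exp_nat_mul, Real.exp_log hp]
    rw [← hval]
    refine hexp.congr' ?_
    filter_upwards [self_mem_nhdsWithin] with θ (hθ : 0 < θ)
    have hx1 : 1 ≤ p ^ (-θ) := Real.one_le_rpow_of_pos_of_le_one_of_nonpos hp hp1 (by linarith)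
    have hB1 : (1 : ℝ) ≤ (K : ℝ) * (p ^ (-θ) - 1) + 1 := by
      have hKc : (1:ℝ) ≤ (K:ℝ) := by exact_mod_cast hK
      nlinarith
    have hg0 : g 0 = 0 := by simp [hgdef]
    have hsl : slope g 0 θ = g θ / θ := by
      rw [slope_def_field, hg0]
      field_simp
      rw [sub_zero, sub_zero, mul_div_assoc, div_self hθ.ne', mul_one]
    rw [hsl]
    rw [Real.rpow_def_of_pos (by linarith : (0:ℝ) < (K : ℝ) * (p ^ (-θ) - 1) + 1)]
    have : Real.log ((K : ℝ) * (p ^ (-θ) - 1) + 1) = g θ := by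
      rw [hgdef]; simp only [hu θ]
    rw [this]
    ring_nf
end
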